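/- (Donsker–Varadhan lower bound, finite case) Let Ω be a nonempty finite set and let p, q be probability mass functions on Ω with q(ω) > 0 whenever p(ω) > 0. Then for every function f : Ω → ℝ, ∑_{ω∈Ω} p(ω)·f(ω) − log( ∑_{ω∈Ω} q(ω)·exp f(ω) ) ≤ D(p‖q). -/

import Mathlib

/-- **Donsker–Varadhan lower bound, finite case.** For pmfs `p, q` on a
nonempty finite set `Ω` with `q` positive wherever `p` is, for every `f : Ω → ℝ`,
`∑ p·f − log(∑ q·exp f) ≤ D(p‖q)`. -/
theorem donsker_varadhan_lower_bound
    {Ω : Type*} [Fintype Ω] [Nonempty Ω]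
    (p q : Ω → ℝ)
    (hp0 : ∀ ω, 0 ≤ p ω) (hp1 : ∑ ω : Ω, p ω = 1)
    (hq0 : ∀ ω, 0 ≤ q ω) (hq1 : ∑ ω : Ω, q ω = 1)
    (hqp : ∀ ω, 0 < p ω → 0 < q ω)
    (f : Ω → ℝ) :
    (∑ ω : Ω, p ω * f ω) - Real.log (∑ ω : Ω, q ω * Real.exp (f ω))
      ≤ ∑ ω ∈ Finset.univ.filter (fun ω : Ω => 0 < p ω),
          p ω * Real.log (p ω / q ω) := by
  classical
  set s := Finset.univ.filter (fun ω : Ω => 0 < p ω) with hs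
  set Z := ∑ ω : Ω, q ω * Real.exp (f ω) with hZ
  have hq_exists : ∃ ω : Ω, 0 < q ω := by
    by_contra h
    push_neg at h
    have : ∑ ω : Ω, q ω = 0 :=
      Finset.sum_eq_zero (fun ω _ => le_antisymm (h ω) (hq0 ω))
    rw [this] at hq1; norm_num at hq1
  obtain ⟨ω0, hω0⟩ := hq_exists
  have hZpos : 0 < Z :=
    Finset.sum_pos' (fun ω _ => mul_nonneg (hq0 ω) (Real.exp_pos _).le)
      ⟨ω0, Finset.mem_univ _, mul_pos hω0 (Real.exp_pos _)⟩
  have hp_zero : ∀ ω ∉ s, p ω = 0 := by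
    intro ω hω
    simp only [hs, Finset.mem_filter, Finset.mem_univ, true_and, not_lt] at hω
    exact le_antisymm hω (hp0 ω)
  have hps : ∑ ω ∈ s, p ω = 1 := by
    rw [← hp1]
    exact Finset.sum_subset (Finset.subset_univ s) (fun ω _ h => hp_zero ω h)
  have hpf : ∑ ω : Ω, p ω * f ω = ∑ ω ∈ s, p ω * f ω := by
    refine (Finset.sum_subset (Finset.subset_univ s) (fun ω _ h => ?_)).symm
    simp [hp_zero ω h]
  have hqZ : ∑ ω ∈ s, q ω * Real.exp (f ω) ≤ Z := by
    rw [hZ]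
    exact Finset.sum_le_sum_of_subset_of_nonneg (Finset.subset_univ s)
      (fun ω _ _ => mul_nonneg (hq0 ω) (Real.exp_pos _).le)
  have key : ∀ ω ∈ s, p ω * f ω - p ω * Real.log (p ω / q ω)
      ≤ p ω * Real.log Z + q ω * Real.exp (f ω) / Z - p ω := by
    intro ω hω
    have hpw : 0 < p ω := by
      simpa [hs, Finset.mem_filter] using hω
    have hqw : 0 < q ω := hqp ω hpw
    have ha : 0 < Real.exp (f ω) * q ω / p ω / Z := by positivity
    have hlog := Real.log_le_sub_one_of_pos ha
    have hlogeq : Real.log (Real.exp (f ω) * q ω / p ω / Z)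
        = f ω + Real.log (q ω) - Real.log (p ω) - Real.log Z := by
      rw [Real.log_div (by positivity) hZpos.ne', Real.log_div (by positivity) hpw.ne',
        Real.log_mul (Real.exp_pos _).ne' hqw.ne', Real.log_exp]
    rw [hlogeq] at hlog
    rw [Real.log_div hpw.ne' hqw.ne']
    have h2 : p ω * (f ω + Real.log (q ω) - Real.log (p ω) - Real.log Z)
        ≤ p ω * (Real.exp (f ω) * q ω / p ω / Z - 1) :=
      mul_le_mul_of_nonneg_left hlog hpw.le
    have h3 : p ω * (Real.exp (f ω) * q ω / p ω / Z) = q ω * Real.exp (f ω) / Z := by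
      field_simp
    nlinarith [h2, h3]
  have main : ∑ ω ∈ s, (p ω * f ω - p ω * Real.log (p ω / q ω)) ≤ Real.log Z := by
    calc ∑ ω ∈ s, (p ω * f ω - p ω * Real.log (p ω / q ω))
        ≤ ∑ ω ∈ s, (p ω * Real.log Z + q ω * Real.exp (f ω) / Z - p ω) :=
          Finset.sum_le_sum key
      _ = (∑ ω ∈ s, p ω) * Real.log Z + (∑ ω ∈ s, q ω * Real.exp (f ω)) / Z
            - ∑ ω ∈ s, p ω := by
          rw [Finset.sum_sub_distrib, Finset.sum_add_distrib, Finset.sum_div,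
            Finset.sum_mul]
      _ = Real.log Z + (∑ ω ∈ s, q ω * Real.exp (f ω)) / Z - 1 := by
          rw [hps]; ring
      _ ≤ Real.log Z + Z / Z - 1 := by
          gcongr
      _ = Real.log Z := by
          rw [div_self hZpos.ne']; ring
  rw [hpf]
  rw [Finset.sum_sub_distrib] at main
  linarith
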